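/- If H is a k-uniform hypergraph with n vertices, m edges, maximum degree Δ and Zagreb index Z(H), then BE(H) ≥ √((km)^3/(k·Z(H))) ≥ √k·m/√Δ. -/

import Mathlib

open Matrix BigOperators Finset

/-- Incidence matrix of a hypergraph on vertex set `Fin n` with edges `E : Fin m → Finset (Fin n)`. -/
noncomputable def inc {n m : ℕ} (E : Fin m → Finset (Fin n)) : Matrix (Fin n) (Fin m) ℝ :=
  fun v e => if v ∈ E e then 1 else 0

/-- Adjacency matrix of the line multigraph: `(e,f)`-entry is `|E e ∩ E f|` for `e ≠ f`, `0` on diagonal. -/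
noncomputable def lineAdj {n m : ℕ} (E : Fin m → Finset (Fin n)) : Matrix (Fin m) (Fin m) ℝ :=
  fun e f => if e = f then 0 else ((E e ∩ E f).card : ℝ)

/-- Adjacency matrix of the clique multigraph: `(u,v)`-entry is the number of edges containing both. -/
noncomputable def cliqueAdj {n m : ℕ} (E : Fin m → Finset (Fin n)) : Matrix (Fin n) (Fin n) ℝ :=
  fun u v => if u = v then 0 else ((univ.filter fun e => u ∈ E e ∧ v ∈ E e).card : ℝ)

/-- Degree of a vertex: number of edges containing it. -/
def deg {n m : ℕ} (E : Fin m → Finset (Fin n)) (v : Fin n) : ℕ :=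
  (univ.filter fun e => v ∈ E e).card

lemma aux_traces {N : Type*} [Fintype N] [DecidableEq N] (A : Matrix N N ℝ) (hA : A.IsHermitian) :
    A.trace = ∑ i, hA.eigenvalues i ∧ (A * A).trace = ∑ i, hA.eigenvalues i ^ 2 := by
  set U : Matrix N N ℝ := (hA.eigenvectorUnitary : Matrix N N ℝ) with hUdef
  set D : Matrix N N ℝ := diagonal (RCLike.ofReal ∘ hA.eigenvalues) with hDdef
  have hU : star U * U = 1 := (Matrix.mem_unitaryGroup_iff').mp (hA.eigenvectorUnitary).2
  have h : A = U * D * star U := by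
    conv_lhs => rw [hA.spectral_theorem]
    simp only [Unitary.conjStarAlgAut_apply, Unitary.coe_star, hUdef, hDdef]
  constructor
  · calc A.trace = (U * D * star U).trace := by rw [← h]
      _ = (star U * (U * D)).trace := by rw [trace_mul_comm]
      _ = D.trace := by rw [← mul_assoc, hU, one_mul]
      _ = ∑ i, hA.eigenvalues i := by simp [hDdef, trace_diagonal]
  · have h2 : A * A = U * (D * D) * star U := by
      rw [h]
      calc U * D * star U * (U * D * star U) = U * D * (star U * U) * D * star U := by
            simp only [mul_assoc]
        _ = U * (D * D) * star U := by rw [hU]; simp only [mul_one, mul_assoc]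
    calc (A * A).trace = (U * (D * D) * star U).trace := by rw [h2]
      _ = (star U * (U * (D * D))).trace := by rw [trace_mul_comm]
      _ = (D * D).trace := by rw [← mul_assoc, hU, one_mul]
      _ = ∑ i, hA.eigenvalues i ^ 2 := by
          simp [hDdef, diagonal_mul_diagonal, trace_diagonal, sq]

lemma hQuv {n m : ℕ} (E : Fin m → Finset (Fin n)) (u v : Fin n) :
    (inc E * (inc E)ᵀ) u v = ((univ.filter fun e => u ∈ E e ∧ v ∈ E e).card : ℝ) := by
  rw [Finset.card_filter]
  push_cast
  rw [Matrix.mul_apply]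
  apply Finset.sum_congr rfl
  intro e _
  simp only [inc, Matrix.transpose_apply, ite_and]
  by_cases h1 : u ∈ E e <;> by_cases h2 : v ∈ E e <;> simp [h1, h2]

lemma hQsymm {n m : ℕ} (E : Fin m → Finset (Fin n)) (u v : Fin n) :
    (inc E * (inc E)ᵀ) u v = (inc E * (inc E)ᵀ) v u := by
  rw [hQuv, hQuv]
  congr 2
  apply Finset.filter_congr
  intro e _; simp [and_comm]

lemma hdiag {n m : ℕ} (E : Fin m → Finset (Fin n)) (v : Fin n) :
    (inc E * (inc E)ᵀ) v v = (deg E v : ℝ) := by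
  rw [hQuv]; simp [deg]

lemma hsumdeg {n m k : ℕ} (E : Fin m → Finset (Fin n)) (hk : ∀ e, (E e).card = k) :
    ∑ v, deg E v = m * k := by
  simp only [deg, Finset.card_filter]
  rw [Finset.sum_comm]
  have : ∀ e : Fin m, (∑ v : Fin n, if v ∈ E e then 1 else 0) = k := by
    intro e
    rw [Finset.sum_ite_mem, Finset.univ_inter, Finset.sum_const, smul_eq_mul, mul_one, hk]
  simp [this]

lemma hrowsum {n m k : ℕ} (E : Fin m → Finset (Fin n)) (hk : ∀ e, (E e).card = k) (v : Fin n) :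
    ∑ u, (univ.filter fun e => u ∈ E e ∧ v ∈ E e).card = k * deg E v := by
  simp only [Finset.card_filter]
  rw [Finset.sum_comm]
  have : ∀ e : Fin m, (∑ u : Fin n, if u ∈ E e ∧ v ∈ E e then 1 else 0)
      = if v ∈ E e then k else 0 := by
    intro e
    by_cases h : v ∈ E e
    · simp only [h, and_true, if_true]
      rw [Finset.sum_ite_mem, Finset.univ_inter, Finset.sum_const, smul_eq_mul, mul_one, hk]
    · simp [h]
  rw [Finset.sum_congr rfl fun e _ => this e, deg, Finset.card_filter, Finset.mul_sum]
  apply Finset.sum_congr rfl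
  intro e _
  by_cases h : v ∈ E e <;> simp [h]

lemma arith_aux (km S s3 p2 kZ : ℝ) (hkm : 0 < km) (hkZ : 0 < kZ) (hS0 : 0 ≤ S)
    (cs1 : s3 ^ 2 ≤ km * p2) (cs2 : km ^ 2 ≤ S * s3) :
    km ^ 3 ≤ S ^ 2 * p2 := by
  have h4 : (km ^ 2) ^ 2 ≤ (S * s3) ^ 2 := pow_le_pow_left₀ (sq_nonneg _) cs2 2
  have h6 : S ^ 2 * s3 ^ 2 ≤ S ^ 2 * (km * p2) := mul_le_mul_of_nonneg_left cs1 (sq_nonneg S)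
  nlinarith [h4, h6, hkm]

lemma hQle {n m : ℕ} (E : Fin m → Finset (Fin n)) (u v : Fin n) :
    (univ.filter fun e => u ∈ E e ∧ v ∈ E e).card ≤ deg E v := by
  apply Finset.card_le_card
  intro e he
  simp only [Finset.mem_filter] at he ⊢
  exact ⟨he.1, he.2.2⟩

/-- `BE(H) ≥ √((km)³/(k Z(H))) ≥ √k·m/√Δ`. -/
theorem stmt13 {n m k : ℕ} (E : Fin m → Finset (Fin n))
    (hk2 : 2 ≤ k) (hk : ∀ e, (E e).card = k)
    (hQ : (inc E * (inc E)ᵀ).IsHermitian)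
    (Z : ℝ) (hZ : Z = ∑ v, (deg E v : ℝ) ^ 2)
    (Δ : ℕ) (hΔ : Δ = univ.sup (deg E)) :
    Real.sqrt k * m / Real.sqrt Δ ≤ Real.sqrt ((k * m : ℝ) ^ 3 / (k * Z)) ∧
    Real.sqrt ((k * m : ℝ) ^ 3 / (k * Z)) ≤ ∑ i, Real.sqrt (hQ.eigenvalues i) := by
  obtain ⟨htr, htr2⟩ := aux_traces _ hQ
  -- eigenvalues are nonnegative
  have hT : (inc E)ᵀ = (inc E)ᴴ := by
    ext e v; simp [Matrix.conjTranspose_apply, Matrix.transpose_apply]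
  have hPSD : (inc E * (inc E)ᵀ).PosSemidef := by
    rw [hT]; exact Matrix.posSemidef_self_mul_conjTranspose _
  have hnn : ∀ i, 0 ≤ hQ.eigenvalues i := fun i => hPSD.eigenvalues_nonneg i
  -- sum of eigenvalues equals k m
  have h1 : ∑ i, hQ.eigenvalues i = (k : ℝ) * m := by
    rw [← htr, Matrix.trace]
    have : ∀ v, (inc E * (inc E)ᵀ).diag v = (deg E v : ℝ) := fun v => hdiag E v
    rw [Finset.sum_congr rfl fun v _ => this v]
    rw [← Nat.cast_sum, hsumdeg E hk]
    push_cast; ring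
  -- sum of squares of eigenvalues is at most k Z
  have h2 : ∑ i, hQ.eigenvalues i ^ 2 ≤ (k : ℝ) * Z := by
    rw [← htr2, Matrix.trace]
    have hdg : ∀ u, ((inc E * (inc E)ᵀ) * (inc E * (inc E)ᵀ)).diag u
        = ∑ v, (inc E * (inc E)ᵀ) u v * (inc E * (inc E)ᵀ) v u := by
      intro u; rw [Matrix.diag_apply, Matrix.mul_apply]
    rw [Finset.sum_congr rfl fun u _ => hdg u, Finset.sum_comm, hZ, Finset.mul_sum]
    apply Finset.sum_le_sum
    intro v _
    have key : ∀ u, (inc E * (inc E)ᵀ) u v * (inc E * (inc E)ᵀ) v u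
        ≤ (deg E v : ℝ) * (inc E * (inc E)ᵀ) u v := by
      intro u
      rw [← hQsymm E u v, hQuv]
      have hle : ((univ.filter fun e => u ∈ E e ∧ v ∈ E e).card : ℝ) ≤ (deg E v : ℝ) := by
        exact_mod_cast hQle E u v
      have hnn' : (0:ℝ) ≤ ((univ.filter fun e => u ∈ E e ∧ v ∈ E e).card : ℝ) := by positivity
      nlinarith
    calc ∑ u, (inc E * (inc E)ᵀ) u v * (inc E * (inc E)ᵀ) v u
        ≤ ∑ u, (deg E v : ℝ) * (inc E * (inc E)ᵀ) u v := Finset.sum_le_sum fun u _ => key u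
      _ = (deg E v : ℝ) * ∑ u, (inc E * (inc E)ᵀ) u v := by rw [Finset.mul_sum]
      _ = (deg E v : ℝ) * ((k : ℝ) * (deg E v : ℝ)) := by
          congr 1
          rw [Finset.sum_congr rfl fun u _ => hQuv E u v, ← Nat.cast_sum, hrowsum E hk]
          push_cast; ring
      _ = (k : ℝ) * (deg E v : ℝ) ^ 2 := by ring
  rcases Nat.eq_zero_or_pos m with hm0 | hmpos
  · subst hm0
    simp only [Nat.cast_zero, mul_zero, zero_pow, zero_div, Real.sqrt_zero, three_ne_zero,
      Ne, not_false_iff]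
    constructor
    · simp
    · exact Finset.sum_nonneg fun i _ => Real.sqrt_nonneg _
  -- m > 0 case
  have hmR : (0:ℝ) < m := by exact_mod_cast hmpos
  have hkR : (0:ℝ) < k := by positivity
  have hkm : (0:ℝ) < (k:ℝ) * m := by positivity
  -- a vertex of positive degree
  obtain ⟨v0, hv0⟩ : ∃ v, deg E v ≠ 0 := by
    by_contra hc
    push_neg at hc
    have := hsumdeg E hk
    rw [Finset.sum_congr rfl fun v _ => hc v] at this
    simp at this
    rcases this with h | h
    · omega
    · omega
  have hv0' : 1 ≤ deg E v0 := Nat.one_le_iff_ne_zero.mpr hv0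
  have hΔ1 : 1 ≤ Δ := le_trans hv0' (hΔ ▸ Finset.le_sup (Finset.mem_univ v0))
  have hΔR : (0:ℝ) < Δ := by exact_mod_cast hΔ1
  have hZpos : 0 < Z := by
    rw [hZ]
    have : (1:ℝ) ≤ (deg E v0 : ℝ) ^ 2 := by
      have : (1:ℝ) ≤ (deg E v0 : ℝ) := by exact_mod_cast hv0'
      nlinarith
    calc (0:ℝ) < (deg E v0 : ℝ) ^ 2 := by linarith
      _ ≤ ∑ v, (deg E v : ℝ) ^ 2 :=
        Finset.single_le_sum (f := fun v => (deg E v : ℝ) ^ 2)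
          (fun v _ => by positivity) (Finset.mem_univ v0)
  have hkZpos : (0:ℝ) < (k:ℝ) * Z := by positivity
  -- Z ≤ Δ k m
  have hZle : Z ≤ (Δ : ℝ) * ((k:ℝ) * m) := by
    rw [hZ]
    have hdegΔ : ∀ v, (deg E v : ℝ) ≤ (Δ : ℝ) := by
      intro v; exact_mod_cast hΔ ▸ Finset.le_sup (Finset.mem_univ v)
    calc ∑ v, (deg E v : ℝ) ^ 2 ≤ ∑ v, (Δ : ℝ) * (deg E v : ℝ) := by
          apply Finset.sum_le_sum
          intro v _
          have h := hdegΔ v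
          have : (0:ℝ) ≤ (deg E v : ℝ) := by positivity
          nlinarith
      _ = (Δ : ℝ) * ∑ v, (deg E v : ℝ) := by rw [Finset.mul_sum]
      _ = (Δ : ℝ) * ((k:ℝ) * m) := by
          congr 1
          rw [← Nat.cast_sum, hsumdeg E hk]; push_cast; ring
  constructor
  · -- first inequality
    have e1 : Real.sqrt k * m / Real.sqrt Δ = Real.sqrt ((k:ℝ) * m^2 / Δ) := by
      rw [Real.sqrt_div (by positivity), Real.sqrt_mul (by positivity),
        Real.sqrt_sq (by positivity)]
    rw [e1]
    apply Real.sqrt_le_sqrt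
    have e2 : ((k:ℝ) * m)^3 / ((k:ℝ) * ((Δ:ℝ) * ((k:ℝ) * m))) = (k:ℝ) * m^2 / Δ := by
      field_simp
    rw [← e2]
    apply div_le_div_of_nonneg_left (by positivity) hkZpos
    nlinarith
  · -- second inequality
    set a : Fin n → ℝ := fun i => Real.sqrt (hQ.eigenvalues i) with ha
    have ha0 : ∀ i, 0 ≤ a i := fun i => Real.sqrt_nonneg _
    have ha2 : ∀ i, a i ^ 2 = hQ.eigenvalues i := fun i => Real.sq_sqrt (hnn i)
    set S := ∑ i, a i with hS
    set s3 := ∑ i, a i * a i ^ 2 with hs3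
    set p2 := ∑ i, hQ.eigenvalues i ^ 2 with hp2
    have hS0 : 0 ≤ S := Finset.sum_nonneg fun i _ => ha0 i
    have hs30 : 0 ≤ s3 := Finset.sum_nonneg fun i _ => by positivity
    -- Cauchy–Schwarz 1 : s3² ≤ (km) p2
    have cs1 : s3 ^ 2 ≤ ((k:ℝ) * m) * p2 := by
      have := Finset.sum_mul_sq_le_sq_mul_sq univ a (fun i => a i ^ 2)
      have e3 : ∑ i, (a i ^ 2) ^ 2 = p2 := by
        apply Finset.sum_congr rfl; intro i _; rw [ha2]
      have e4 : ∑ i, a i ^ 2 = (k:ℝ) * m := by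
        rw [← h1]; exact Finset.sum_congr rfl fun i _ => ha2 i
      rw [e3, e4] at this
      exact this
    -- Cauchy–Schwarz 2 : (km)² ≤ S s3
    have cs2 : ((k:ℝ) * m) ^ 2 ≤ S * s3 := by
      have := Finset.sum_mul_sq_le_sq_mul_sq univ (fun i => Real.sqrt (a i))
        (fun i => a i * Real.sqrt (a i))
      have e5 : ∀ i, Real.sqrt (a i) * (a i * Real.sqrt (a i)) = a i ^ 2 := by
        intro i
        have h := Real.mul_self_sqrt (ha0 i)
        calc Real.sqrt (a i) * (a i * Real.sqrt (a i))
            = Real.sqrt (a i) * Real.sqrt (a i) * a i := by ring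
          _ = a i * a i := by rw [h]
          _ = a i ^ 2 := (pow_two (a i)).symm
      have e6 : ∀ i, Real.sqrt (a i) ^ 2 = a i := fun i => Real.sq_sqrt (ha0 i)
      have e7 : ∀ i, (a i * Real.sqrt (a i)) ^ 2 = a i * a i ^ 2 := by
        intro i
        have h := Real.mul_self_sqrt (ha0 i)
        calc (a i * Real.sqrt (a i)) ^ 2
            = Real.sqrt (a i) * Real.sqrt (a i) * (a i * a i) := by ring
          _ = a i * (a i * a i) := by rw [h]
          _ = a i * a i ^ 2 := by rw [pow_two]
      rw [Finset.sum_congr rfl fun i _ => e5 i, Finset.sum_congr rfl fun i _ => e6 i,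
        Finset.sum_congr rfl fun i _ => e7 i] at this
      have e4 : ∑ i, a i ^ 2 = (k:ℝ) * m := by
        rw [← h1]; exact Finset.sum_congr rfl fun i _ => ha2 i
      rw [e4] at this
      exact this
    -- combine : (km)³ ≤ S² p2
    have key : ((k:ℝ) * m) ^ 3 ≤ S ^ 2 * p2 :=
      arith_aux ((k:ℝ)*m) S s3 p2 ((k:ℝ)*Z) hkm hkZpos hS0 cs1 cs2
    have hp2le : p2 ≤ (k:ℝ) * Z := h2
    have h7 : S ^ 2 * p2 ≤ S ^ 2 * ((k:ℝ) * Z) := mul_le_mul_of_nonneg_left hp2le (sq_nonneg S)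
    have final : ((k:ℝ) * m) ^ 3 / ((k:ℝ) * Z) ≤ S ^ 2 := by
      rw [div_le_iff₀ hkZpos]
      linarith
    calc Real.sqrt (((k:ℝ) * m) ^ 3 / ((k:ℝ) * Z)) ≤ Real.sqrt (S ^ 2) :=
          Real.sqrt_le_sqrt final
      _ = S := Real.sqrt_sq hS0
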